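/- arXiv:1905.11069 — 3 statements merged into one kernel-verified Lean document; each statement's English description precedes it below -/
import Mathlib

section
/- General quantum Jarzynski equation (standard case): Let (P_i)_{i∈I}, (Q_j)_{j∈J} be projective resolutions of the identity on a finite-dimensional Hilbert space H, U unitary, and G : ℝ^L → ℝ a function with associated spectral values E_i^λ, F_j^λ such that ρ = ∑_i G(E_i) P_i is a density operator (ρ ≥ 0, tr ρ = 1) and p(i) = G(E_i) tr(P_i) > 0 for all i. Assume q(j) := G(F_j) tr(Q_j) satisfies ∑_j q(j) = 1. Then with joint probabilities p(i,j) = tr(Q_j U (P_i/tr P_i) U*) · p(i), one has ∑_{(i,j)} (G(F_j)/G(E_i)) · p(i,j) = 1. -/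
open Matrix ComplexOrder

/-- General quantum Jarzynski equation (standard case): if the initial density
operator is a function `G` of commuting observables, `ρ = ∑_i G(E_i) P_i`, then
the expectation of `G(F_j)/G(E_i)` with respect to the physical joint
probabilities equals 1. -/
theorem stmt_10 {n L : ℕ} {I J : Type*} [Fintype I] [Fintype J]
    (P : I → Matrix (Fin n) (Fin n) ℂ)
    (hPherm : ∀ i, (P i).IsHermitian) (hPidem : ∀ i, P i * P i = P i)
    (hPorth : ∀ i i', i ≠ i' → P i * P i' = 0)
    (hPsum : ∑ i, P i = 1)
    (Q : J → Matrix (Fin n) (Fin n) ℂ)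
    (hQherm : ∀ j, (Q j).IsHermitian) (hQidem : ∀ j, Q j * Q j = Q j)
    (hQorth : ∀ j j', j ≠ j' → Q j * Q j' = 0)
    (hQsum : ∑ j, Q j = 1)
    (d : I → ℕ) (hd : ∀ i, (P i).trace = (d i : ℂ)) (hd0 : ∀ i, 0 < d i)
    (D : J → ℕ) (hD : ∀ j, (Q j).trace = (D j : ℂ)) (hD0 : ∀ j, 0 < D j)
    (U : Matrix (Fin n) (Fin n) ℂ) (hU : U ∈ Matrix.unitaryGroup (Fin n) ℂ)
    (G : (Fin L → ℝ) → ℝ) (E : I → Fin L → ℝ) (F : J → Fin L → ℝ)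
    (ρ : Matrix (Fin n) (Fin n) ℂ) (hρ : ρ = ∑ i, (G (E i) : ℂ) • P i)
    (hρpos : ρ.PosSemidef) (hρtr : ρ.trace = 1)
    -- first-measurement probabilities are positive
    (p : I → ℝ) (hp : ∀ i, p i = G (E i) * (d i : ℝ)) (hppos : ∀ i, 0 < p i)
    -- hypothetical probabilities sum to one
    (q : J → ℝ) (hq : ∀ j, q j = G (F j) * (D j : ℝ)) (hGF : ∀ j, 0 < G (F j)) (hqsum : ∑ j, q j = 1)
    -- physical joint probabilities
    (prob : I × J → ℝ)
    (hprob : ∀ i j, prob (i, j) =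
      ((Q j * U * P i * Uᴴ).trace / (d i : ℂ)).re * p i) :
    ∑ ij : I × J, (G (F ij.2) / G (E ij.1)) * prob ij = 1 := by

  have hGE : ∀ i, G (E i) ≠ 0 := by
    intro i
    have h := hppos i
    rw [hp i] at h
    intro h0
    simp [h0] at h
  have hU1 : U * Uᴴ = 1 := by
    have := (Matrix.mem_unitaryGroup_iff).mp hU
    simpa [Matrix.star_eq_conjTranspose] using this
  have key : ∀ i j, (G (F j) / G (E i)) * prob (i, j)
      = G (F j) * ((Q j * U * P i * Uᴴ).trace).re := by
    intro i j
    have hdR : ((d i : ℝ)) ≠ 0 := Nat.cast_ne_zero.mpr (hd0 i).ne'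
    have hcast : ((d i : ℂ)) = (((d i : ℝ) : ℂ)) := by push_cast; ring
    rw [hprob i j, hp i, hcast, Complex.div_ofReal_re]
    field_simp [hGE i]
  calc ∑ ij : I × J, (G (F ij.2) / G (E ij.1)) * prob ij
      = ∑ j, ∑ i, G (F j) * ((Q j * U * P i * Uᴴ).trace).re := by
        rw [Fintype.sum_prod_type, Finset.sum_comm]
        exact Finset.sum_congr rfl fun j _ => Finset.sum_congr rfl fun i _ => key i j
    _ = ∑ j, G (F j) * (D j : ℝ) := by
        refine Finset.sum_congr rfl fun j _ => ?_
        rw [← Finset.mul_sum, ← Complex.re_sum]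
        have : ∑ i, Q j * U * P i * Uᴴ = Q j := by
          rw [← Finset.sum_mul, ← Finset.mul_sum, hPsum, mul_one, mul_assoc, hU1, mul_one]
        rw [← Matrix.trace_sum, this, hD j]
        simp
    _ = 1 := by rw [← hqsum]; exact Finset.sum_congr rfl fun j _ => (hq j).symm
end

section
/- Abstract Crooks fluctuation theorem: In a modified statistical model (I, J, P, d, D) with positive marginal p, modified doubly stochastic π, positive hypothetical probabilities q, random variable Y(i,j) = d(i)q(j)/(D(j)p(i)), and reciprocal model P̃(j,i) = π(j|i)(d(i)/D(j))q(j) with random variable Ỹ(j,i) = 1/Y(i,j): for every value y attained by Y, Prob_P(Y = y) / Prob_{P̃}(Ỹ = 1/y) = 1/y, i.e. Prob_{P̃}(Ỹ = 1/y) = y · Prob_P(Y = y). -/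
/-- Abstract Crooks fluctuation theorem: the reciprocal probability that
`Ỹ = 1/y` equals `y` times the probability that `Y = y`. -/
theorem stmt_14 {I J : Type*} [Countable I] [Countable J]
    (π : I → J → ℝ) (hπ0 : ∀ i j, 0 ≤ π i j)
    (hπrow : ∀ i, ∑' j : J, π i j = 1)
    (p : I → ℝ) (hppos : ∀ i, 0 < p i) (hpsum : ∑' i : I, p i = 1)
    (d : I → ℕ) (hd : ∀ i, 0 < d i)
    (D : J → ℕ) (hD : ∀ j, 0 < D j)
    (hmds : ∀ j : J, ∑' i : I, π i j * (d i : ℝ) = (D j : ℝ))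
    (q : J → ℝ) (hqpos : ∀ j, 0 < q j) (hqsum : ∑' j : J, q j = 1)
    (P : I × J → ℝ) (hP : ∀ i j, P (i, j) = π i j * p i)
    (Pt : J × I → ℝ)
    (hPt : ∀ j i, Pt (j, i) = π i j * ((d i : ℝ) / (D j : ℝ)) * q j)
    (Y : I × J → ℝ)
    (hY : ∀ i j, Y (i, j) = (d i : ℝ) * q j / ((D j : ℝ) * p i))
    (Yt : J × I → ℝ) (hYt : ∀ j i, Yt (j, i) = 1 / Y (i, j))
    (y : ℝ) (hy : ∃ ij : I × J, Y ij = y) :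
    ∑' ji : {ji : J × I // Yt ji = 1 / y}, Pt ji
      = y * ∑' ij : {ij : I × J // Y ij = y}, P ij := by
  have hYpos : ∀ i j, 0 < Y (i, j) := by
    intro i j
    rw [hY]
    have h1 : (0:ℝ) < d i := by exact_mod_cast hd i
    have h2 : (0:ℝ) < D j := by exact_mod_cast hD j
    exact div_pos (mul_pos h1 (hqpos j)) (mul_pos h2 (hppos i))
  obtain ⟨⟨i0, j0⟩, hij0⟩ := hy
  have hy0 : 0 < y := hij0 ▸ hYpos i0 j0
  let e : {ji : J × I // Yt ji = 1 / y} ≃ {ij : I × J // Y ij = y} :=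
    { toFun := fun x => ⟨(x.1.2, x.1.1), by
        have hx := x.2
        rw [show x.1 = (x.1.1, x.1.2) from rfl, hYt] at hx
        exact inv_injective (by simpa [one_div] using hx)⟩
      invFun := fun x => ⟨(x.1.2, x.1.1), by
        rw [show x.1 = (x.1.1, x.1.2) from rfl] at *
        rw [hYt, x.2]⟩
      left_inv := fun x => by ext <;> rfl
      right_inv := fun x => by ext <;> rfl }
  rw [← Equiv.tsum_eq e.symm (fun ji => Pt ji)]
  rw [← tsum_mul_left]
  congr 1
  funext x
  obtain ⟨⟨i, j⟩, hx⟩ := x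
  show Pt (j, i) = y * P (i, j)
  rw [hPt, hP, ← hx, hY]
  have hpi := hppos i
  have hDj := hD j
  have hdi := hd i
  field_simp
end

section
/- Crooks implies Jarzynski: If P and P̃ are probability distributions on countable E = I × J and Ẽ = J × I respectively, Y : E → ℝ₊ and Ỹ(j,i) = 1/Y(i,j), and for every y in the range Y of values, Prob_{P̃}(Ỹ = 1/y) = y · Prob_P(Y = y), then the expectation ⟨Y⟩_P = ∑_y Prob_P(Y = y) · y = 1. -/
open scoped ENNReal

/-- Fiber decomposition of an `ℝ≥0∞`-valued tsum along a map `f`. -/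
lemma fiber_decomp {α : Type*} (f : α → ℝ) (g : α → ℝ≥0∞) :
    ∑' a : α, g a = ∑' y : ℝ, ∑' a : {a : α // f a = y}, g a := by
  rw [← (Equiv.sigmaFiberEquiv f).tsum_eq, ENNReal.tsum_sigma']
  rfl

/-- Crooks implies Jarzynski: if for every attained value `y` of `Y` one has
`Prob_{P̃}(Ỹ = 1/y) = y · Prob_P(Y = y)`, then `⟨Y⟩_P = 1`. -/
theorem stmt_15 {I J : Type*} [Countable I] [Countable J]
    (P : I × J → ℝ) (hP0 : ∀ ij, 0 ≤ P ij)
    (hPsum : ∑' ij : I × J, P ij = 1)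
    (Pt : J × I → ℝ) (hPt0 : ∀ ji, 0 ≤ Pt ji)
    (hPtsum : ∑' ji : J × I, Pt ji = 1)
    (Y : I × J → ℝ) (hYpos : ∀ ij, 0 < Y ij)
    (Yt : J × I → ℝ) (hYt : ∀ j i, Yt (j, i) = 1 / Y (i, j))
    (hCrooks : ∀ y : ℝ, (∃ ij : I × J, Y ij = y) →
      ∑' ji : {ji : J × I // Yt ji = 1 / y}, Pt ji
        = y * ∑' ij : {ij : I × J // Y ij = y}, P ij) :
    ∑' ij : I × J, Y ij * P ij = 1 := by
  -- Summability of P and Pt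
  have hSP : Summable P := by
    by_contra h
    rw [tsum_eq_zero_of_not_summable h] at hPsum; norm_num at hPsum
  have hSPt : Summable Pt := by
    by_contra h
    rw [tsum_eq_zero_of_not_summable h] at hPtsum; norm_num at hPtsum
  -- lift to ℝ≥0∞
  set p : I × J → ℝ≥0∞ := fun ij => ENNReal.ofReal (P ij) with hp
  set pt : J × I → ℝ≥0∞ := fun ji => ENNReal.ofReal (Pt ji) with hpt
  have hpsum : ∑' ij, p ij = 1 := by
    rw [← ENNReal.ofReal_tsum_of_nonneg hP0 hSP, hPsum, ENNReal.ofReal_one]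
  have hptsum : ∑' ji, pt ji = 1 := by
    rw [← ENNReal.ofReal_tsum_of_nonneg hPt0 hSPt, hPtsum, ENNReal.ofReal_one]
  -- the inversion equivalence on ℝ
  let e : ℝ ≃ ℝ := ⟨fun x => x⁻¹, fun x => x⁻¹, fun x => inv_inv x, fun x => inv_inv x⟩
  -- key ENNReal identity
  have key : ∑' ij : I × J, ENNReal.ofReal (Y ij * P ij) = 1 := by
    calc ∑' ij : I × J, ENNReal.ofReal (Y ij * P ij)
        = ∑' y : ℝ, ∑' ij : {ij : I × J // Y ij = y},
            ENNReal.ofReal (Y ij.1 * P ij.1) :=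
          fiber_decomp Y _
      _ = ∑' y : ℝ, ∑' ji : {ji : J × I // Yt ji = y⁻¹}, pt ji := by
          refine tsum_congr fun y => ?_
          by_cases hy : ∃ ij : I × J, Y ij = y
          · -- Crooks case
            have hy0 : 0 < y := by obtain ⟨ij, rfl⟩ := hy; exact hYpos ij
            rw [show (y⁻¹ : ℝ) = 1 / y from (one_div y).symm]
            have h1 : ∑' ij : {ij : I × J // Y ij = y},
                ENNReal.ofReal (Y ij.1 * P ij.1)
                = ENNReal.ofReal y * ∑' ij : {ij : I × J // Y ij = y}, p ij.1 := by
              rw [← ENNReal.tsum_mul_left]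
              refine tsum_congr fun ij => ?_
              rw [hp, ← ENNReal.ofReal_mul hy0.le, ij.2]
            have hs2 : Summable (fun ji : {ji : J × I // Yt ji = 1 / y} => Pt ji.1) :=
              hSPt.subtype _
            have hs3 : Summable (fun ij : {ij : I × J // Y ij = y} => P ij.1) :=
              hSP.subtype _
            have h2 : (∑' ji : {ji : J × I // Yt ji = 1 / y}, pt ji.1)
                = ENNReal.ofReal (∑' ji : {ji : J × I // Yt ji = 1 / y}, Pt ji.1) := by
              rw [ENNReal.ofReal_tsum_of_nonneg (fun ji : {ji : J × I // Yt ji = 1 / y} => hPt0 ji.1) hs2]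
            have h3 : (∑' ij : {ij : I × J // Y ij = y}, p ij.1)
                = ENNReal.ofReal (∑' ij : {ij : I × J // Y ij = y}, P ij.1) := by
              rw [ENNReal.ofReal_tsum_of_nonneg (fun ij : {ij : I × J // Y ij = y} => hP0 ij.1) hs3]
            rw [h1, h2, h3, hCrooks y hy, ENNReal.ofReal_mul hy0.le]
          · -- empty fibers on both sides
            have hempty1 : IsEmpty {ij : I × J // Y ij = y} := by
              constructor; rintro ⟨ij, hij⟩; exact hy ⟨ij, hij⟩
            have hempty2 : IsEmpty {ji : J × I // Yt ji = y⁻¹} := by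
              constructor
              rintro ⟨⟨j, i⟩, hji⟩
              rw [hYt, one_div] at hji
              exact hy ⟨(i, j), inv_injective hji⟩
            rw [tsum_empty, tsum_empty]
      _ = ∑' y : ℝ, ∑' ji : {ji : J × I // Yt ji = y}, pt ji := by
          exact (e.tsum_eq fun y => ∑' ji : {ji : J × I // Yt ji = y}, pt ji.1)
      _ = ∑' ji : J × I, pt ji := (fiber_decomp Yt pt).symm
      _ = 1 := hptsum
  -- back to ℝ
  have hne : ∑' ij : I × J, ENNReal.ofReal (Y ij * P ij) ≠ ⊤ := by
    rw [key]; exact ENNReal.one_ne_top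
  have := ENNReal.tsum_toReal_eq
    (f := fun ij : I × J => ENNReal.ofReal (Y ij * P ij)) (fun _ => ENNReal.ofReal_ne_top)
  rw [key, ENNReal.toReal_one] at this
  calc ∑' ij : I × J, Y ij * P ij
      = ∑' ij : I × J, (ENNReal.ofReal (Y ij * P ij)).toReal :=
        tsum_congr fun ij =>
          (ENNReal.toReal_ofReal (mul_nonneg (hYpos ij).le (hP0 ij))).symm
    _ = 1 := this.symm
end
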